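/- arXiv:2508.21105 — 2 statements merged into one kernel-verified Lean document; each statement's English description precedes it below -/
import Mathlib

section
/- If for every set x there is a transitive set t containing x as a subset that reflects a given formula φ (i.e., φ holds in the universe iff its relativization to t holds, for all parameters from t), then the Collection scheme instance for φ holds: for all sets w and u, if for every x ∈ w there exists y with φ(x, y, u), then there is a set v such that for every x ∈ w there is y ∈ v with φ(x, y, u). -/
/-- RP (reflection for the formula `∃ y, φ x y u`) implies the Collection
scheme instance for `φ`. -/
theorem rp_implies_collection (φ : ZFSet → ZFSet → ZFSet → Prop)
    (RP : ∀ a : ZFSet, ∃ t : ZFSet, t.IsTransitive ∧ a ⊆ t ∧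
      ∀ x ∈ t, ∀ u ∈ t, ((∃ y, φ x y u) ↔ ∃ y ∈ t, φ x y u)) :
    ∀ w u : ZFSet, (∀ x ∈ w, ∃ y, φ x y u) →
      ∃ v : ZFSet, ∀ x ∈ w, ∃ y ∈ v, φ x y u := by
  intro w u hw
  obtain ⟨t, _, hsub, hrefl⟩ := RP (insert u w)
  refine ⟨t, fun x hx => ?_⟩
  have hxt : x ∈ t := hsub (ZFSet.mem_insert_iff.mpr (Or.inr hx))
  have hut : u ∈ t := hsub (ZFSet.mem_insert_iff.mpr (Or.inl rfl))
  exact (hrefl x hxt u hut).mp (hw x hx)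
end

section
/- If there is a well-ordering of the whole universe U (a type with a well-order whose initial segments are sets) then there exists an injective 'cardinality' map # on subsets of U, sending each X to 0 if X is equinumerous to U, and otherwise to (the code of) the least y such that X is equinumerous to the initial segment below y; this map satisfies Hume's Principle: #X = #Y ↔ (X is equinumerous to Y). -/
open Ordinal in
private lemma exists_seg_equiv {U : Type*} (r : U → U → Prop) [IsWellOrder U r]
    (X : Set U) (h : ¬ Nonempty (↥X ≃ U)) :
    ∃ y, Nonempty (↥X ≃ ↥{x | r x y}) := by
  have hle : Ordinal.type (Subrel r (· ∈ X)) ≤ Ordinal.type r :=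
    (Subrel.relEmbedding r (· ∈ X)).ordinal_type_le
  rcases lt_or_eq_of_le hle with hlt | heq
  · obtain ⟨y, hy⟩ := Ordinal.typein_surj r hlt
    have : Ordinal.type (Subrel r (· ∈ X)) = Ordinal.type (Subrel r (r · y)) := by
      rw [Ordinal.type_subrel, hy]
    exact ⟨y, ⟨(Ordinal.type_eq.mp this).some.toEquiv⟩⟩
  · exact absurd ⟨(Ordinal.type_eq.mp heq).some.toEquiv⟩ h

/-- A global well-ordering yields a definable cardinality assignment fulfilling
Hume's Principle: `#X = none` iff `X` is equinumerous with the universe, and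
otherwise `#X` is the least `y` such that `X` is equinumerous with the initial
segment `{x | r x y}`. -/
theorem global_wellorder_gives_hume {U : Type*} (r : U → U → Prop)
    [IsWellOrder U r] :
    ∃ card : Set U → Option U,
      (∀ X Y : Set U, card X = card Y ↔ Nonempty (↥X ≃ ↥Y)) ∧
      (∀ X : Set U, card X = none ↔ Nonempty (↥X ≃ U)) ∧
      (∀ X : Set U, ∀ y : U, card X = some y →
        Nonempty (↥X ≃ ↥{x | r x y}) ∧
        ∀ z : U, Nonempty (↥X ≃ ↥{x | r x z}) → ¬ r z y) := by
  classical
  have wf : WellFounded r := IsWellFounded.wf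
  set S : Set U → Set U := fun X => {y | Nonempty (↥X ≃ ↥{x | r x y})} with hS
  set card : Set U → Option U := fun X =>
    if h : Nonempty (↥X ≃ U) then none
    else some (wf.min (S X) (exists_seg_equiv r X h)) with hcard
  have hnone : ∀ X : Set U, card X = none ↔ Nonempty (↥X ≃ U) := by
    intro X
    by_cases h : Nonempty (↥X ≃ U) <;> simp [hcard, h]
  have hsome : ∀ X : Set U, ∀ y : U, card X = some y →
      Nonempty (↥X ≃ ↥{x | r x y}) ∧
      ∀ z : U, Nonempty (↥X ≃ ↥{x | r x z}) → ¬ r z y := by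
    intro X y hy
    by_cases h : Nonempty (↥X ≃ U)
    · simp [hcard, h] at hy
    · simp only [hcard, dif_neg h, Option.some.injEq] at hy
      subst hy
      exact ⟨wf.min_mem (S X) _, fun z hz => wf.not_lt_min _ hz⟩
  refine ⟨card, ?_, hnone, hsome⟩
  intro X Y
  constructor
  · intro hXY
    rcases hX : card X with _ | y
    · have h1 := (hnone X).mp hX
      have h2 := (hnone Y).mp (hXY ▸ hX)
      exact ⟨h1.some.trans h2.some.symm⟩
    · obtain ⟨⟨e1⟩, _⟩ := hsome X y hX
      obtain ⟨⟨e2⟩, _⟩ := hsome Y y (hXY ▸ hX)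
      exact ⟨e1.trans e2.symm⟩
  · rintro ⟨e⟩
    have hU : Nonempty (↥X ≃ U) ↔ Nonempty (↥Y ≃ U) :=
      ⟨fun ⟨f⟩ => ⟨e.symm.trans f⟩, fun ⟨f⟩ => ⟨e.trans f⟩⟩
    by_cases h : Nonempty (↥X ≃ U)
    · simp [hcard, h, hU.mp h]
    · have h' : ¬ Nonempty (↥Y ≃ U) := fun hy => h (hU.mpr hy)
      have hSeq : S X = S Y := by
        ext z
        exact ⟨fun ⟨f⟩ => ⟨e.symm.trans f⟩, fun ⟨f⟩ => ⟨e.trans f⟩⟩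
      simp only [hcard, dif_neg h, dif_neg h', Option.some.injEq]
      congr 1
end
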